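/- For all real t > 0, the function f(t) = (1/t + 1)·log(1 + t) + (1 + t)·log(1 + 1/t) satisfies f(t) ≥ f(1) = 4·log(2). -/

import Mathlib

open Real Set

/-- Auxiliary function: numerator of the second derivative of `φ`. -/
noncomputable def psiAux (p : ℝ) : ℝ := (p⁻¹ - 1) ^ 2 - 2 * (p⁻¹ - 1) - 2 * Real.log p

lemma psiAux_hasDerivAt {p : ℝ} (hp : p ≠ 0) :
    HasDerivAt psiAux (-2 * (1 - p) ^ 2 / p ^ 3) p := by
  have h1 : HasDerivAt (fun x : ℝ => x⁻¹ - 1) (-(p ^ 2)⁻¹) p := by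
    simpa using (hasDerivAt_inv hp).sub_const 1
  have h2 : HasDerivAt (fun x : ℝ => (x⁻¹ - 1) ^ 2)
      (2 * (p⁻¹ - 1) ^ 1 * (-(p ^ 2)⁻¹)) p := h1.pow 2
  have h3 : HasDerivAt Real.log p⁻¹ p := Real.hasDerivAt_log hp
  have h := (h2.sub (h1.const_mul 2)).sub (h3.const_mul 2)
  refine h.congr_deriv ?_
  field_simp
  ring

lemma psiAux_nonneg {p : ℝ} (hp : 0 < p) (hp1 : p ≤ 1) : 0 ≤ psiAux p := by
  have hanti : AntitoneOn psiAux (Set.Ioc 0 1) := by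
    apply antitoneOn_of_deriv_nonpos (convex_Ioc 0 1)
    · apply ContinuousOn.sub
      apply ContinuousOn.sub
      · exact (continuousOn_inv₀.mono (by intro x hx; exact ne_of_gt hx.1)).sub continuousOn_const
          |>.pow 2
      · exact (continuousOn_const.mul ((continuousOn_inv₀.mono
          (by intro x hx; exact ne_of_gt hx.1)).sub continuousOn_const))
      · exact continuousOn_const.mul (Real.continuousOn_log.mono
          (by intro x hx; exact ne_of_gt hx.1))
    · intro x hx
      rw [interior_Ioc] at hx
      exact (psiAux_hasDerivAt (ne_of_gt hx.1)).differentiableAt.differentiableWithinAt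
    · intro x hx
      rw [interior_Ioc] at hx
      rw [(psiAux_hasDerivAt (ne_of_gt hx.1)).deriv]
      have h1 : (0:ℝ) < x ^ 3 := pow_pos hx.1 3
      have h2 : (0:ℝ) ≤ (1 - x) ^ 2 := sq_nonneg _
      apply div_nonpos_of_nonpos_of_nonneg <;> nlinarith
  have h1 : psiAux 1 = 0 := by simp [psiAux]
  have := hanti (Set.mem_Ioc.2 ⟨hp, hp1⟩) (Set.mem_Ioc.2 ⟨one_pos, le_refl 1⟩) hp1
  rw [h1] at this
  exact this

/-- The function `φ p = - log p / (1 - p)`. -/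
noncomputable def phiAux (p : ℝ) : ℝ := -Real.log p / (1 - p)

lemma phiAux_convex : ConvexOn ℝ (Set.Ioo (0:ℝ) 1) phiAux := by
  have hint : interior (Set.Ioo (0:ℝ) 1) = Set.Ioo (0:ℝ) 1 := interior_Ioo
  refine convexOn_of_hasDerivWithinAt2_nonneg (f' := fun p =>
      -p⁻¹ * (1 - p)⁻¹ + -Real.log p * (1 / (1 - p) ^ 2))
      (f'' := fun p => psiAux p / (1 - p) ^ 3) (convex_Ioo 0 1) ?_ ?_ ?_ ?_
  · apply ContinuousOn.div
    · exact (Real.continuousOn_log.mono (by intro x hx; exact ne_of_gt hx.1)).neg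
    · exact continuousOn_const.sub continuousOn_id
    · intro x hx; exact sub_ne_zero_of_ne (ne_of_gt hx.2)
  · intro x hx
    rw [hint] at hx ⊢
    obtain ⟨hx0, hx1⟩ := hx
    have hxne : x ≠ 0 := ne_of_gt hx0
    have h1x : (1:ℝ) - x ≠ 0 := sub_ne_zero_of_ne (ne_of_gt hx1)
    have hlog : HasDerivAt (fun y : ℝ => -Real.log y) (-x⁻¹) x :=
      (Real.hasDerivAt_log hxne).neg
    have hone : HasDerivAt (fun y : ℝ => 1 - y) (-1) x := by
      simpa using (hasDerivAt_id x).const_sub 1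
    have hinv : HasDerivAt (fun y : ℝ => (1 - y)⁻¹) (-(-1) / (1 - x) ^ 2) x := hone.inv h1x
    have h := hlog.mul hinv
    have heq : HasDerivAt (fun y : ℝ => -Real.log y * (1 - y)⁻¹)
        (-x⁻¹ * (1 - x)⁻¹ + -Real.log x * (1 / (1 - x) ^ 2)) x := by
      refine h.congr_deriv ?_; ring
    have hphi : phiAux = fun y : ℝ => -Real.log y * (1 - y)⁻¹ := by
      funext y; rw [phiAux, div_eq_mul_inv]
    rw [hphi]
    exact heq.hasDerivWithinAt
  · intro x hx
    rw [hint] at hx ⊢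
    obtain ⟨hx0, hx1⟩ := hx
    have hxne : x ≠ 0 := ne_of_gt hx0
    have h1x : (1:ℝ) - x ≠ 0 := sub_ne_zero_of_ne (ne_of_gt hx1)
    have hone : HasDerivAt (fun y : ℝ => 1 - y) (-1) x := by
      simpa using (hasDerivAt_id x).const_sub 1
    have hinv1 : HasDerivAt (fun y : ℝ => (1 - y)⁻¹) (-(-1) / (1 - x) ^ 2) x := hone.inv h1x
    have hneginv : HasDerivAt (fun y : ℝ => -y⁻¹) ((x ^ 2)⁻¹) x := by
      exact (hasDerivAt_inv hxne).neg.congr_deriv (by ring)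
    have hterm1 : HasDerivAt (fun y : ℝ => -y⁻¹ * (1 - y)⁻¹)
        ((x ^ 2)⁻¹ * (1 - x)⁻¹ + -x⁻¹ * (-(-1) / (1 - x) ^ 2)) x := hneginv.mul hinv1
    have hlog : HasDerivAt (fun y : ℝ => -Real.log y) (-x⁻¹) x :=
      (Real.hasDerivAt_log hxne).neg
    have hsq : HasDerivAt (fun y : ℝ => (1 - y) ^ 2) (2 * (1 - x) ^ 1 * (-1)) x := hone.pow 2
    have hsqne : ((1:ℝ) - x) ^ 2 ≠ 0 := pow_ne_zero 2 h1x
    have hinv2 : HasDerivAt (fun y : ℝ => 1 / (1 - y) ^ 2)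
        (-(2 * (1 - x) ^ 1 * (-1)) / ((1 - x) ^ 2) ^ 2) x := by
      have := hsq.inv hsqne
      simp only [one_div]
      exact this
    have hterm2 : HasDerivAt (fun y : ℝ => -Real.log y * (1 / (1 - y) ^ 2))
        (-x⁻¹ * (1 / (1 - x) ^ 2) + -Real.log x * (-(2 * (1 - x) ^ 1 * (-1)) / ((1 - x) ^ 2) ^ 2))
        x := hlog.mul hinv2
    have h := hterm1.add hterm2
    have heq : HasDerivAt (fun y : ℝ => -y⁻¹ * (1 - y)⁻¹ + -Real.log y * (1 / (1 - y) ^ 2))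
        (psiAux x / (1 - x) ^ 3) x := by
      refine h.congr_deriv ?_
      rw [psiAux]
      field_simp
      ring
    exact heq.hasDerivWithinAt
  · intro x hx
    rw [hint] at hx
    obtain ⟨hx0, hx1⟩ := hx
    have h1 : (0:ℝ) < (1 - x) ^ 3 := pow_pos (by linarith) 3
    exact div_nonneg (psiAux_nonneg hx0 hx1.le) h1.le

lemma key_ineq {p : ℝ} (hp0 : 0 < p) (hp1 : p < 1) :
    4 * Real.log 2 ≤ phiAux p + phiAux (1 - p) := by
  have hmem1 : p ∈ Set.Ioo (0:ℝ) 1 := ⟨hp0, hp1⟩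
  have hmem2 : (1 - p) ∈ Set.Ioo (0:ℝ) 1 := ⟨by linarith, by linarith⟩
  have h := phiAux_convex.2 hmem1 hmem2 (by norm_num : (0:ℝ) ≤ 1/2)
    (by norm_num : (0:ℝ) ≤ 1/2) (by norm_num)
  have hmid : (1/2 : ℝ) • p + (1/2 : ℝ) • (1 - p) = 1/2 := by
    simp [smul_eq_mul]; ring
  rw [hmid] at h
  have hval : phiAux (1/2) = 2 * Real.log 2 := by
    rw [phiAux]
    rw [show Real.log (1/2) = -Real.log 2 by
      rw [one_div, Real.log_inv]]
    ring
  rw [hval, smul_eq_mul, smul_eq_mul] at h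
  linarith

theorem stmt_1 (f : ℝ → ℝ)
    (hf : ∀ t : ℝ, f t = (1 / t + 1) * Real.log (1 + t) + (1 + t) * Real.log (1 + 1 / t)) :
    (∀ t : ℝ, 0 < t → f t ≥ f 1) ∧ f 1 = 4 * Real.log 2 := by
  have hf1 : f 1 = 4 * Real.log 2 := by
    rw [hf]
    norm_num
    ring
  refine ⟨fun t ht => ?_, hf1⟩
  rw [hf1, hf, ge_iff_le]
  have h1t : (0:ℝ) < 1 + t := by linarith
  have hp0 : 0 < 1 / (1 + t) := by positivity
  have hp1 : 1 / (1 + t) < 1 := by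
    rw [div_lt_one h1t]; linarith
  have hkey := key_ineq hp0 hp1
  have e1 : phiAux (1 / (1 + t)) = (1 / t + 1) * Real.log (1 + t) := by
    rw [phiAux, one_div, Real.log_inv]
    have : (1:ℝ) - (1 + t)⁻¹ = t / (1 + t) := by
      field_simp
      ring
    rw [this]
    field_simp
  have e2 : (1:ℝ) - 1 / (1 + t) = t / (1 + t) := by
    field_simp
    ring
  have e3 : phiAux (t / (1 + t)) = (1 + t) * Real.log (1 + 1 / t) := by
    rw [phiAux]
    have hlog : Real.log (t / (1 + t)) = Real.log t - Real.log (1 + t) :=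
      Real.log_div (ne_of_gt ht) (ne_of_gt h1t)
    have hlog2 : Real.log (1 + 1 / t) = Real.log (1 + t) - Real.log t := by
      rw [show (1:ℝ) + 1 / t = (1 + t) / t by field_simp; ring]
      exact Real.log_div (ne_of_gt h1t) (ne_of_gt ht)
    rw [hlog, hlog2]
    have : (1:ℝ) - t / (1 + t) = 1 / (1 + t) := by field_simp; ring
    rw [this]
    field_simp
    ring
  rw [e2, e1, e3] at hkey
  exact hkey
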